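/- The polynomial p(x) = x² - 4x + 4 = (x-2)² is nonnegative on all of ℝ (hence belongs to 𝒫_1), but p ∉ 𝒫_2: there exists an entrywise nonnegative 2-by-2 real matrix A such that p(A) has a negative entry. Consequently, 𝒫_2 is a proper subset of 𝒫_1. -/

import Mathlib

open Polynomial Matrix

/-- `Pn n p` means the real polynomial `p` preserves entrywise nonnegativity of all
`n`-by-`n` nonnegative real matrices. -/
def Pn (n : ℕ) (p : Polynomial ℝ) : Prop :=
  ∀ A : Matrix (Fin n) (Fin n) ℝ, (∀ i j, 0 ≤ A i j) →
    ∀ i j, 0 ≤ ((Polynomial.aeval A) p) i j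

/-- The `r mod n`-part of a real polynomial. -/
noncomputable def rpart (p : Polynomial ℝ) (n r : ℕ) : Polynomial ℝ :=
  ∑ j ∈ Finset.range (p.natDegree + 1),
    if j % n = r then Polynomial.C (p.coeff j) * Polynomial.X ^ j else 0

lemma aux_scalar (q : Polynomial ℝ) (n : ℕ) [NeZero n] (c : ℝ) :
    (Polynomial.aeval (algebraMap ℝ (Matrix (Fin n) (Fin n) ℝ) c) q : Matrix (Fin n) (Fin n) ℝ)
      = algebraMap ℝ _ (q.eval c) := by
  rw [Polynomial.aeval_algebraMap_apply]
  simp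

lemma Pn2_sub_Pn1 : {q : Polynomial ℝ | Pn 2 q} ⊆ {q : Polynomial ℝ | Pn 1 q} := by
  intro q hq A hA i j
  fin_cases i; fin_cases j
  have hA' : A = algebraMap ℝ (Matrix (Fin 1) (Fin 1) ℝ) (A 0 0) := by
    ext i j
    fin_cases i; fin_cases j
    simp [Matrix.algebraMap_matrix_apply]
  rw [hA', aux_scalar]
  have h2 := hq (algebraMap ℝ (Matrix (Fin 2) (Fin 2) ℝ) (A 0 0))
    (by
      intro i j
      rw [Matrix.algebraMap_matrix_apply]
      split
      · exact hA 0 0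
      · exact le_refl 0) 0 0
  rw [aux_scalar] at h2
  simp only [Matrix.algebraMap_matrix_apply, if_pos rfl] at h2 ⊢
  exact h2

noncomputable def badA : Matrix (Fin 2) (Fin 2) ℝ := ![![0, 1], ![1, 0]]

theorem stmt_12 :
    (∀ x : ℝ, 0 ≤ (Polynomial.X ^ 2 - Polynomial.C 4 * Polynomial.X + Polynomial.C 4 :
        Polynomial ℝ).eval x) ∧
    (∃ A : Matrix (Fin 2) (Fin 2) ℝ, (∀ i j, 0 ≤ A i j) ∧
      ∃ i j, ((Polynomial.aeval A)
        (Polynomial.X ^ 2 - Polynomial.C 4 * Polynomial.X + Polynomial.C 4 :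
          Polynomial ℝ)) i j < 0) ∧
    {q : Polynomial ℝ | Pn 2 q} ⊂ {q : Polynomial ℝ | Pn 1 q} := by
  have hbadA : ∀ i j, 0 ≤ badA i j := by
    intro i j; fin_cases i <;> fin_cases j <;> norm_num [badA]
  have hbadneg : ((Polynomial.aeval badA)
      (Polynomial.X ^ 2 - Polynomial.C 4 * Polynomial.X + Polynomial.C 4 :
        Polynomial ℝ)) 0 1 < 0 := by
    simp only [map_add, map_sub, _root_.map_mul, map_pow, Polynomial.aeval_X, Polynomial.aeval_C]
    simp only [Matrix.add_apply, Matrix.sub_apply, pow_two, Matrix.mul_apply, Fin.sum_univ_two,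
      Matrix.algebraMap_matrix_apply]
    simp [badA, Matrix.mul_apply, Matrix.algebraMap_matrix_apply, pow_two, Fin.sum_univ_two]
  have hpeval : ∀ x : ℝ, 0 ≤ (Polynomial.X ^ 2 - Polynomial.C 4 * Polynomial.X + Polynomial.C 4 :
      Polynomial ℝ).eval x := by
    intro x
    simp only [Polynomial.eval_add, Polynomial.eval_sub, Polynomial.eval_mul, Polynomial.eval_pow,
      Polynomial.eval_X, Polynomial.eval_C]
    nlinarith [sq_nonneg (x - 2)]
  refine ⟨hpeval, ⟨badA, hbadA, 0, 1, hbadneg⟩, Pn2_sub_Pn1, ?_⟩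
  intro hsub
  have hP1 : (Polynomial.X ^ 2 - Polynomial.C 4 * Polynomial.X + Polynomial.C 4 :
      Polynomial ℝ) ∈ {q : Polynomial ℝ | Pn 1 q} := by
    intro A hA i j
    fin_cases i; fin_cases j
    have hA' : A = algebraMap ℝ (Matrix (Fin 1) (Fin 1) ℝ) (A 0 0) := by
      ext i j
      fin_cases i; fin_cases j
      simp [Matrix.algebraMap_matrix_apply]
    rw [hA', aux_scalar]
    simpa [Matrix.algebraMap_matrix_apply] using hpeval (A 0 0)
  have hP2 := hsub hP1
  exact absurd (hP2 badA hbadA 0 1) (not_le.mpr hbadneg)
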